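/- Let p ≥ 5 be a prime and A a finite symmetric generating set of SL₂(F_p). Write |A³| = K·|A| and suppose |A| > 12 + 16·K·|A|^(1/3) (as real numbers). Then A·A contains an element g whose trace satisfies tr(g) ∉ {0, 2, −2}. -/

import Mathlib

open Matrix

lemma trace_mul_expand' {R : Type*} [CommRing R] (a b : Matrix (Fin 2) (Fin 2) R) :
    trace (a * b) = a 0 0 * b 0 0 + a 0 1 * b 1 0 + a 1 0 * b 0 1 + a 1 1 * b 1 1 := by
  simp [Matrix.trace_fin_two, Matrix.mul_apply, Fin.sum_univ_two]
  ring

lemma trace_sq' {R : Type*} [CommRing R] (a : Matrix (Fin 2) (Fin 2) R) :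
    Matrix.trace (a * a) = (Matrix.trace a)^2 - 2 * Matrix.det a := by
  rw [trace_mul_expand', Matrix.det_fin_two, Matrix.trace_fin_two]; ring

lemma trace_mul_adj {R : Type*} [CommRing R] (a b : Matrix (Fin 2) (Fin 2) R) :
    Matrix.trace (a * Matrix.adjugate b) = Matrix.trace a * Matrix.trace b - Matrix.trace (a * b) := by
  rw [Matrix.adjugate_fin_two]
  rw [trace_mul_expand', trace_mul_expand', Matrix.trace_fin_two, Matrix.trace_fin_two]
  simp
  ring

lemma det_sub' {R : Type*} [CommRing R] (a b : Matrix (Fin 2) (Fin 2) R) :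
    Matrix.det (a - b) = Matrix.det a + Matrix.det b - Matrix.trace a * Matrix.trace b
      + Matrix.trace (a * b) := by
  rw [trace_mul_expand', Matrix.det_fin_two, Matrix.det_fin_two, Matrix.det_fin_two,
    Matrix.trace_fin_two, Matrix.trace_fin_two]
  simp [Matrix.sub_apply]
  ring

lemma SL2_key {R : Type*} [CommRing R] (g h : Matrix.SpecialLinearGroup (Fin 2) R) :
    Matrix.trace ((g : Matrix (Fin 2) (Fin 2) R) * (h : Matrix (Fin 2) (Fin 2) R))
      + Matrix.trace ((g : Matrix (Fin 2) (Fin 2) R) * ((h⁻¹ : Matrix.SpecialLinearGroup (Fin 2) R) : Matrix (Fin 2) (Fin 2) R))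
      = Matrix.trace (g : Matrix (Fin 2) (Fin 2) R) * Matrix.trace (h : Matrix (Fin 2) (Fin 2) R) := by
  rw [Matrix.SpecialLinearGroup.coe_inv, trace_mul_adj]; ring

lemma borel_contra {p : ℕ} [Fact p.Prime]
    (A : Finset (Matrix.SpecialLinearGroup (Fin 2) (ZMod p)))
    (hgen : Subgroup.closure (A : Set (Matrix.SpecialLinearGroup (Fin 2) (ZMod p))) = ⊤)
    (v : Matrix (Fin 2) (Fin 2) (ZMod p)) (hv : v ≠ 0)
    (htr : trace v = 0) (hdet : det v = 0)
    (hA : ∀ g ∈ A, trace ((g : Matrix (Fin 2) (Fin 2) (ZMod p)) * v) = 0) : False := by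
  rw [Matrix.trace_fin_two] at htr
  rw [Matrix.det_fin_two] at hdet
  -- find a nonzero vector u whose line is preserved by every element of A
  obtain ⟨u, hu, hAu⟩ : ∃ u : Fin 2 → ZMod p, u ≠ 0 ∧
      ∀ g ∈ A, ∃ lam : ZMod p, (g : Matrix (Fin 2) (Fin 2) (ZMod p)).mulVec u = lam • u := by
    by_cases hb : v 0 1 = 0
    · -- then v 0 0 = 0 (since (v00)² = v00*(−v11)… use det) and v is lower triangular nilpotent
      have ha0 : v 0 0 = 0 := by
        have h1 : v 0 0 * v 0 0 = 0 := by linear_combination v 0 0 * htr - hdet - v 1 0 * hb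
        exact (mul_self_eq_zero).mp h1
      have h11 : v 1 1 = 0 := by linear_combination htr - ha0
      have hc : v 1 0 ≠ 0 := by
        intro hc0
        apply hv
        ext i j
        fin_cases i <;> fin_cases j <;> simp_all
      refine ⟨![0, 1], by simp [funext_iff, Fin.forall_fin_two], ?_⟩
      intro g hg
      have h01 : (g : Matrix (Fin 2) (Fin 2) (ZMod p)) 0 1 = 0 := by
        have := hA g hg
        rw [trace_mul_expand'] at this
        have h2 : (g : Matrix (Fin 2) (Fin 2) (ZMod p)) 0 1 * v 1 0 = 0 := by
          linear_combination this - (g : Matrix (Fin 2) (Fin 2) (ZMod p)) 0 0 * ha0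
            - (g : Matrix (Fin 2) (Fin 2) (ZMod p)) 1 0 * hb - (g : Matrix (Fin 2) (Fin 2) (ZMod p)) 1 1 * h11
        exact (mul_eq_zero.mp h2).resolve_right hc
      refine ⟨(g : Matrix (Fin 2) (Fin 2) (ZMod p)) 1 1, ?_⟩
      funext i
      fin_cases i <;> simp [Matrix.mulVec, dotProduct, Fin.sum_univ_two, h01]
    · -- v 0 1 ≠ 0 : use u = ![v 0 1, - v 0 0]
      refine ⟨![v 0 1, - v 0 0], ?_, ?_⟩
      · intro h0
        apply hb
        have := congrFun h0 0
        simpa using this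
      intro g hg
      have htrg := hA g hg
      rw [trace_mul_expand'] at htrg
      refine ⟨(g : Matrix (Fin 2) (Fin 2) (ZMod p)) 0 0
        - (g : Matrix (Fin 2) (Fin 2) (ZMod p)) 0 1 * v 0 0 * (v 0 1)⁻¹, ?_⟩
      funext i
      set gm := (g : Matrix (Fin 2) (Fin 2) (ZMod p))
      fin_cases i <;>
        simp only [Matrix.mulVec, dotProduct, Fin.sum_univ_two, Matrix.cons_val_zero,
          Matrix.cons_val_one, Matrix.head_cons, Pi.smul_apply, smul_eq_mul, Fin.zero_eta, Fin.mk_one]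
      · field_simp
        ring
      · field_simp
        -- goal : relation among entries; use htrg, hdet, htr
        linear_combination (v 0 1) * htrg - (gm 0 1 * v 0 0 + v 0 1 * gm 1 1) * htr + gm 0 1 * hdet
  -- the line stabilizer of u is a proper subgroup containing A
  set M2 := Matrix (Fin 2) (Fin 2) (ZMod p)
  let H : Subgroup (Matrix.SpecialLinearGroup (Fin 2) (ZMod p)) :=
  { carrier := {g | ∃ lam : ZMod p, (g : M2).mulVec u = lam • u}
    one_mem' := ⟨1, by simp [Matrix.SpecialLinearGroup.coe_one, Matrix.one_mulVec]⟩
    mul_mem' := by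
      rintro g h ⟨lg, hgl⟩ ⟨lh, hhl⟩
      refine ⟨lg * lh, ?_⟩
      rw [Matrix.SpecialLinearGroup.coe_mul, ← Matrix.mulVec_mulVec, hhl,
        Matrix.mulVec_smul, hgl, smul_smul, mul_comm]
    inv_mem' := by
      rintro g ⟨l, hgl⟩
      have hl : l ≠ 0 := by
        rintro rfl
        rw [zero_smul] at hgl
        apply hu
        have : ((g⁻¹ : Matrix.SpecialLinearGroup (Fin 2) (ZMod p)) : M2).mulVec
            ((g : M2).mulVec u) = u := by
          rw [Matrix.mulVec_mulVec, ← Matrix.SpecialLinearGroup.coe_mul, inv_mul_cancel,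
            Matrix.SpecialLinearGroup.coe_one, Matrix.one_mulVec]
        rw [← this, hgl, Matrix.mulVec_zero]
      refine ⟨l⁻¹, ?_⟩
      have hu' : u = l⁻¹ • ((g : M2).mulVec u) := by
        rw [hgl, smul_smul, inv_mul_cancel₀ hl, one_smul]
      calc ((g⁻¹ : Matrix.SpecialLinearGroup (Fin 2) (ZMod p)) : M2).mulVec u
          = ((g⁻¹ : Matrix.SpecialLinearGroup (Fin 2) (ZMod p)) : M2).mulVec
              (l⁻¹ • ((g : M2).mulVec u)) := by rw [← hu']
        _ = l⁻¹ • (((g⁻¹ : Matrix.SpecialLinearGroup (Fin 2) (ZMod p)) : M2).mulVec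
              ((g : M2).mulVec u)) := by rw [Matrix.mulVec_smul]
        _ = l⁻¹ • u := by
              rw [Matrix.mulVec_mulVec, ← Matrix.SpecialLinearGroup.coe_mul, inv_mul_cancel,
                Matrix.SpecialLinearGroup.coe_one, Matrix.one_mulVec] }
  have hAH : (A : Set (Matrix.SpecialLinearGroup (Fin 2) (ZMod p))) ⊆ H := by
    intro g hg
    exact hAu g (by exact_mod_cast hg)
  have htop : ∀ g : Matrix.SpecialLinearGroup (Fin 2) (ZMod p), g ∈ H := by
    intro g
    have : (⊤ : Subgroup (Matrix.SpecialLinearGroup (Fin 2) (ZMod p))) ≤ H := by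
      rw [← hgen]
      exact (Subgroup.closure_le H).mpr hAH
    exact this (Subgroup.mem_top g)
  -- properness
  have hu01 : u 0 ≠ 0 ∨ u 1 ≠ 0 := by
    by_contra hcon
    push_neg at hcon
    apply hu
    funext i
    fin_cases i <;> simp [hcon.1, hcon.2]
  have mv_upper : ∀ w : Fin 2 → ZMod p,
      (!![1, 1; 0, 1] : Matrix (Fin 2) (Fin 2) (ZMod p)).mulVec w = ![w 0 + w 1, w 1] := by
    intro w
    funext i
    fin_cases i <;> simp [Matrix.mulVec, dotProduct, Fin.sum_univ_two]
  have mv_lower : ∀ w : Fin 2 → ZMod p,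
      (!![1, 0; 1, 1] : Matrix (Fin 2) (Fin 2) (ZMod p)).mulVec w = ![w 0, w 0 + w 1] := by
    intro w
    funext i
    fin_cases i <;> simp [Matrix.mulVec, dotProduct, Fin.sum_univ_two]
  by_cases hu1 : u 1 ≠ 0
  · obtain ⟨lam, hlam⟩ := htop ⟨!![1, 1; 0, 1], by norm_num [Matrix.det_fin_two_of]⟩
    rw [show ((⟨!![1, 1; 0, 1], by norm_num [Matrix.det_fin_two_of]⟩ :
        Matrix.SpecialLinearGroup (Fin 2) (ZMod p)) : M2) = !![1, 1; 0, 1] from rfl,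
      mv_upper] at hlam
    have h0 : u 0 + u 1 = lam * u 0 := by simpa using congrFun hlam 0
    have h1 : u 1 = lam * u 1 := by simpa using congrFun hlam 1
    have hl1 : lam = 1 := mul_right_cancel₀ hu1 (by rw [one_mul, ← h1])
    rw [hl1, one_mul] at h0
    exact hu1 (by linear_combination h0)
  · push_neg at hu1
    have hu0 : u 0 ≠ 0 := hu01.resolve_right (by simpa using hu1)
    obtain ⟨lam, hlam⟩ := htop ⟨!![1, 0; 1, 1], by norm_num [Matrix.det_fin_two_of]⟩
    rw [show ((⟨!![1, 0; 1, 1], by norm_num [Matrix.det_fin_two_of]⟩ :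
        Matrix.SpecialLinearGroup (Fin 2) (ZMod p)) : M2) = !![1, 0; 1, 1] from rfl,
      mv_lower] at hlam
    have h0 : u 0 = lam * u 0 := by simpa using congrFun hlam 0
    have h1 : u 0 + u 1 = lam * u 1 := by simpa using congrFun hlam 1
    rw [hu1, mul_zero, add_zero] at h1
    exact hu0 h1
lemma exists_SL2_elt (p : ℕ) (m : Matrix (Fin 2) (Fin 2) (ZMod p)) (hm : m.det = 1) :
    ∃ g : Matrix.SpecialLinearGroup (Fin 2) (ZMod p),
      (g : Matrix (Fin 2) (Fin 2) (ZMod p)) = m :=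
  ⟨⟨m, hm⟩, rfl⟩

lemma no_sqrt8 {F : Type*} [Field F] (h4 : (4 : F) ≠ 0) (h8 : (8 : F) ≠ 0)
    {s t x y : F} (hs : s ^ 2 = 2) (ht : t ^ 2 = 4) (hsum : x + y = s * t)
    (hx : x = 0 ∨ x = 2 ∨ x = -2) (hy : y = 0 ∨ y = 2 ∨ y = -2) : False := by
  have h8' : (x + y) ^ 2 = 8 := by rw [hsum, mul_pow, hs, ht]; norm_num
  rcases hx with rfl | rfl | rfl <;> rcases hy with rfl | rfl | rfl <;>
    first
      | exact h4 (by linear_combination -h8')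
      | exact h8 (by linear_combination -h8')
      | exact h8 (by linear_combination h8')

lemma enc_eq {F : Type*} [Field F] [DecidableEq F] {k t t' : F}
    (ht : t = 0 ∨ t = k ∨ t = -k) (ht' : t' = 0 ∨ t' = k ∨ t' = -k)
    (h : (if t = 0 then (0 : Fin 3) else if t = k then 1 else 2)
       = (if t' = 0 then (0 : Fin 3) else if t' = k then 1 else 2)) : t = t' := by
  by_cases h1 : t = 0 <;> by_cases h2 : t' = 0
  · rw [h1, h2]
  · rw [if_pos h1, if_neg h2] at h
    by_cases h3 : t' = k
    · rw [if_pos h3] at h; exact absurd h (by decide)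
    · rw [if_neg h3] at h; exact absurd h (by decide)
  · rw [if_neg h1, if_pos h2] at h
    by_cases h3 : t = k
    · rw [if_pos h3] at h; exact absurd h (by decide)
    · rw [if_neg h3] at h; exact absurd h (by decide)
  · rw [if_neg h1, if_neg h2] at h
    by_cases h3 : t = k <;> by_cases h4 : t' = k
    · rw [h3, h4]
    · rw [if_pos h3, if_neg h4] at h; exact absurd h (by decide)
    · rw [if_neg h3, if_pos h4] at h; exact absurd h (by decide)
    · have e1 : t = -k := (ht.resolve_left h1).resolve_left h3
      have e2 : t' = -k := (ht'.resolve_left h2).resolve_left h4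
      rw [e1, e2]

open Pointwise

instance (p : ℕ) : DecidableEq (Matrix.SpecialLinearGroup (Fin 2) (ZMod p)) := by
  unfold Matrix.SpecialLinearGroup
  infer_instance

/-- **Lemma 2.3** (escape from subvarieties): let `p ≥ 5` be prime, `A` a finite
symmetric generating set of `SL₂(F_p)`, write `|A³| = K·|A|` and suppose
`|A| > 12 + 16·K·|A|^{1/3}`. Then `A·A` contains an element whose trace is not in
`{0, 2, -2}` (i.e. a regular semisimple element of nonzero trace). -/
theorem SL2_escape
    (p : ℕ) (hp : p.Prime) (hp5 : 5 ≤ p)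
    (A : Finset (Matrix.SpecialLinearGroup (Fin 2) (ZMod p)))
    (hsym : A⁻¹ = A)
    (hgen : Subgroup.closure (A : Set (Matrix.SpecialLinearGroup (Fin 2) (ZMod p))) = ⊤)
    (K : ℝ) (hK : ((A ^ 3).card : ℝ) = K * (A.card : ℝ))
    (hsize : 12 + 16 * K * (A.card : ℝ) ^ ((1 : ℝ) / 3) < (A.card : ℝ)) :
    ∃ g ∈ A * A,
      Matrix.trace (g : Matrix (Fin 2) (Fin 2) (ZMod p)) ≠ 0 ∧
      Matrix.trace (g : Matrix (Fin 2) (Fin 2) (ZMod p)) ≠ 2 ∧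
      Matrix.trace (g : Matrix (Fin 2) (Fin 2) (ZMod p)) ≠ -2 := by
  haveI : Fact p.Prime := ⟨hp⟩
  haveI : Fact (1 < p) := ⟨hp.one_lt⟩
  by_contra hcon
  push_neg at hcon
  have hW : ∀ g : Matrix.SpecialLinearGroup (Fin 2) (ZMod p), g ∈ A * A →
      Matrix.trace (g : Matrix (Fin 2) (Fin 2) (ZMod p)) = 0 ∨
      Matrix.trace (g : Matrix (Fin 2) (Fin 2) (ZMod p)) = 2 ∨
      Matrix.trace (g : Matrix (Fin 2) (Fin 2) (ZMod p)) = -2 := by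
    intro g hg
    by_cases h0 : Matrix.trace (g : Matrix (Fin 2) (Fin 2) (ZMod p)) = 0
    · exact Or.inl h0
    by_cases h2 : Matrix.trace (g : Matrix (Fin 2) (Fin 2) (ZMod p)) = 2
    · exact Or.inr (Or.inl h2)
    exact Or.inr (Or.inr (hcon g hg h0 h2))
  have hW' : ∀ a b : Matrix.SpecialLinearGroup (Fin 2) (ZMod p), a ∈ A → b ∈ A →
      Matrix.trace ((a : Matrix (Fin 2) (Fin 2) (ZMod p)) * (b : Matrix (Fin 2) (Fin 2) (ZMod p))) = 0 ∨
      Matrix.trace ((a : Matrix (Fin 2) (Fin 2) (ZMod p)) * (b : Matrix (Fin 2) (Fin 2) (ZMod p))) = 2 ∨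
      Matrix.trace ((a : Matrix (Fin 2) (Fin 2) (ZMod p)) * (b : Matrix (Fin 2) (Fin 2) (ZMod p))) = -2 := by
    intro a b ha hb
    have := hW (a * b) (Finset.mul_mem_mul ha hb)
    simpa [Matrix.SpecialLinearGroup.coe_mul] using this
  have hinvmem : ∀ a : Matrix.SpecialLinearGroup (Fin 2) (ZMod p), a ∈ A → a⁻¹ ∈ A := by
    intro a ha
    rw [← hsym]
    exact Finset.inv_mem_inv ha
  have hAne : A.Nonempty := by
    rw [Finset.nonempty_iff_ne_empty]
    rintro rfl
    obtain ⟨g₀, hg₀⟩ := exists_SL2_elt p !![1, 1; 0, 1] (by norm_num [Matrix.det_fin_two_of])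
    have h1 : g₀ ∈ Subgroup.closure ((∅ : Finset (Matrix.SpecialLinearGroup (Fin 2) (ZMod p))) :
        Set (Matrix.SpecialLinearGroup (Fin 2) (ZMod p))) := by
      rw [hgen]; exact Subgroup.mem_top _
    simp only [Finset.coe_empty, Subgroup.closure_empty, Subgroup.mem_bot] at h1
    rw [h1] at hg₀
    have h2 := congrArg (fun m : Matrix (Fin 2) (Fin 2) (ZMod p) => m 0 1) hg₀
    simp [Matrix.SpecialLinearGroup.coe_one, Matrix.one_apply] at h2
  -- Step 0 : A.card ≥ 82
  have hApow : A ⊆ A ^ 3 := by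
    obtain ⟨a, ha⟩ := hAne
    intro b hb
    have h3 : A ^ 3 = A * A * A := by rw [pow_succ, sq]
    have : b = a * a⁻¹ * b := by group
    rw [h3, this]
    exact Finset.mul_mem_mul (Finset.mul_mem_mul ha (hinvmem a ha)) hb
  have hNpos : (0 : ℝ) < (A.card : ℝ) := by
    exact_mod_cast Finset.card_pos.mpr hAne
  have hK1 : (1 : ℝ) ≤ K := by
    have hcard3 : (A.card : ℝ) ≤ ((A ^ 3).card : ℝ) := by
      exact_mod_cast Finset.card_le_card hApow
    nlinarith [hK]
  have hx0 : (0 : ℝ) ≤ (A.card : ℝ) ^ ((1 : ℝ) / 3) := Real.rpow_nonneg (le_of_lt hNpos) _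
  have hx3 : ((A.card : ℝ) ^ ((1 : ℝ) / 3)) ^ (3 : ℕ) = (A.card : ℝ) := by
    rw [← Real.rpow_natCast ((A.card : ℝ) ^ ((1 : ℝ) / 3)) 3, ← Real.rpow_mul (le_of_lt hNpos)]
    norm_num
  have h16 : 16 * ((A.card : ℝ) ^ ((1 : ℝ) / 3)) < (A.card : ℝ) - 12 := by nlinarith
  have hcube : 4096 * (A.card : ℝ) < ((A.card : ℝ) - 12) ^ (3 : ℕ) := by
    have h1 : (16 * ((A.card : ℝ) ^ ((1 : ℝ) / 3))) ^ (3 : ℕ) < ((A.card : ℝ) - 12) ^ (3 : ℕ) := by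
      apply pow_lt_pow_left₀ h16 (by positivity)
      norm_num
    calc 4096 * (A.card : ℝ) = (16 * ((A.card : ℝ) ^ ((1 : ℝ) / 3))) ^ (3 : ℕ) := by
          rw [mul_pow, hx3]; norm_num
      _ < _ := h1
  have hN82 : 82 ≤ A.card := by
    by_contra hlt
    push_neg at hlt
    have h13 : 13 ≤ A.card := by
      have h12 : (12 : ℝ) < (A.card : ℝ) := by nlinarith
      exact_mod_cast Nat.succ_le_of_lt (by exact_mod_cast h12)
    obtain ⟨m, hm⟩ : ∃ m, A.card = m + 13 := ⟨A.card - 13, by omega⟩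
    have hm68 : m ≤ 68 := by omega
    have hnat : ∀ n : ℕ, n ≤ 68 → (n + 1) ^ 3 ≤ 4096 * (n + 13) := by decide
    have hnat' := hnat m hm68
    have hcast : ((m : ℝ) + 1) ^ (3 : ℕ) ≤ 4096 * ((m : ℝ) + 13) := by exact_mod_cast hnat'
    rw [hm] at hcube
    push_cast at hcube
    nlinarith [hcube, hcast]
  -- p ≥ 5 arithmetic
  have h4ne : (4 : ZMod p) ≠ 0 := by
    intro h
    have h' : ((4 : ℕ) : ZMod p) = 0 := by exact_mod_cast h
    rw [ZMod.natCast_eq_zero_iff] at h'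
    have h2 : p ∣ 2 := hp.dvd_of_dvd_pow (n := 2) (by norm_num at h' ⊢; exact_mod_cast h')
    have := Nat.le_of_dvd (by norm_num) h2
    omega
  have h8ne : (8 : ZMod p) ≠ 0 := by
    intro h
    have h' : ((8 : ℕ) : ZMod p) = 0 := by exact_mod_cast h
    rw [ZMod.natCast_eq_zero_iff] at h'
    have h2 : p ∣ 2 := hp.dvd_of_dvd_pow (n := 3) (by norm_num at h' ⊢; exact_mod_cast h')
    have := Nat.le_of_dvd (by norm_num) h2
    omega
  -- Step 1 : traces of A lie in a set {0, c, -c}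
  have htrsq : ∀ a : Matrix.SpecialLinearGroup (Fin 2) (ZMod p), a ∈ A →
      (Matrix.trace (a : Matrix (Fin 2) (Fin 2) (ZMod p))) ^ 2 = 2 ∨
      (Matrix.trace (a : Matrix (Fin 2) (Fin 2) (ZMod p))) ^ 2 = 4 ∨
      (Matrix.trace (a : Matrix (Fin 2) (Fin 2) (ZMod p))) ^ 2 = 0 := by
    intro a ha
    have h2 := trace_sq' (a : Matrix (Fin 2) (Fin 2) (ZMod p))
    rw [Matrix.SpecialLinearGroup.det_coe] at h2
    rcases hW' a a ha ha with h | h | h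
    · exact Or.inl (by linear_combination h - h2)
    · exact Or.inr (Or.inl (by linear_combination h - h2))
    · exact Or.inr (Or.inr (by linear_combination h - h2))
  obtain ⟨c, hcA⟩ : ∃ c : ZMod p, ∀ a : Matrix.SpecialLinearGroup (Fin 2) (ZMod p), a ∈ A →
      Matrix.trace (a : Matrix (Fin 2) (Fin 2) (ZMod p)) = 0 ∨
      Matrix.trace (a : Matrix (Fin 2) (Fin 2) (ZMod p)) = c ∨
      Matrix.trace (a : Matrix (Fin 2) (Fin 2) (ZMod p)) = -c := by
    by_cases hall : ∀ a : Matrix.SpecialLinearGroup (Fin 2) (ZMod p), a ∈ A →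
        Matrix.trace (a : Matrix (Fin 2) (Fin 2) (ZMod p)) = 0 ∨
        Matrix.trace (a : Matrix (Fin 2) (Fin 2) (ZMod p)) = 2 ∨
        Matrix.trace (a : Matrix (Fin 2) (Fin 2) (ZMod p)) = -2
    · exact ⟨2, hall⟩
    · push_neg at hall
      obtain ⟨a₀, ha₀, hn0, hn2, hnm2⟩ := hall
      refine ⟨Matrix.trace (a₀ : Matrix (Fin 2) (Fin 2) (ZMod p)), ?_⟩
      have hs2 : (Matrix.trace (a₀ : Matrix (Fin 2) (Fin 2) (ZMod p))) ^ 2 = 2 := by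
        rcases htrsq a₀ ha₀ with h | h | h
        · exact h
        · exfalso
          have hfac : (Matrix.trace (a₀ : Matrix (Fin 2) (Fin 2) (ZMod p)) - 2) *
              (Matrix.trace (a₀ : Matrix (Fin 2) (Fin 2) (ZMod p)) + 2) = 0 := by
            linear_combination h
          rcases mul_eq_zero.mp hfac with h' | h'
          · exact hn2 (by linear_combination h')
          · exact hnm2 (by linear_combination h')
        · exact absurd ((pow_eq_zero_iff (two_ne_zero)).mp h) hn0
      intro a ha
      rcases htrsq a ha with h | h | h
      · have hfac : (Matrix.trace (a : Matrix (Fin 2) (Fin 2) (ZMod p)) -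
            Matrix.trace (a₀ : Matrix (Fin 2) (Fin 2) (ZMod p))) *
            (Matrix.trace (a : Matrix (Fin 2) (Fin 2) (ZMod p)) +
            Matrix.trace (a₀ : Matrix (Fin 2) (Fin 2) (ZMod p))) = 0 := by
          linear_combination h - hs2
        rcases mul_eq_zero.mp hfac with h' | h'
        · exact Or.inr (Or.inl (by linear_combination h'))
        · exact Or.inr (Or.inr (by linear_combination h'))
      · exact (no_sqrt8 h4ne h8ne hs2 h (SL2_key a₀ a)
          (hW' a₀ a ha₀ ha) (hW' a₀ a⁻¹ ha₀ (hinvmem a ha))).elim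
      · exact Or.inl ((pow_eq_zero_iff (two_ne_zero)).mp h)
  -- Step 2 : linear algebra counting
  classical
  let S : Set (Matrix (Fin 2) (Fin 2) (ZMod p)) :=
    ((fun g : Matrix.SpecialLinearGroup (Fin 2) (ZMod p) =>
      (g : Matrix (Fin 2) (Fin 2) (ZMod p))) '' (A : Set _)) ∪ {1}
  obtain ⟨Y, hYS, hYspan, hYind⟩ := exists_linearIndependent (ZMod p) S
  have hYfin : Y.Finite := hYind.setFinite
  set Yf : Finset (Matrix (Fin 2) (Fin 2) (ZMod p)) := hYfin.toFinset with hYfdef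
  have hYcard : Yf.card ≤ 4 := by
    haveI : Fintype Y := hYfin.fintype
    have h1 : Fintype.card Y ≤ Module.finrank (ZMod p) (Matrix (Fin 2) (Fin 2) (ZMod p)) :=
      hYind.fintype_card_le_finrank
    have h2 : Module.finrank (ZMod p) (Matrix (Fin 2) (Fin 2) (ZMod p)) = 4 := by
      rw [Module.finrank_matrix]
      simp [Module.finrank_self]
    have h3 : Yf.card = Fintype.card Y := by
      rw [hYfdef, Set.Finite.card_toFinset]
    omega
  by_cases hcol : ∃ a ∈ A, ∃ b ∈ A, a ≠ b ∧ ∀ y ∈ Y,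
      Matrix.trace ((a : Matrix (Fin 2) (Fin 2) (ZMod p)) * y) =
      Matrix.trace ((b : Matrix (Fin 2) (Fin 2) (ZMod p)) * y)
  · -- collision : Borel contradiction
    obtain ⟨a, ha, b, hb, hab, heq⟩ := hcol
    have hvne : (a : Matrix (Fin 2) (Fin 2) (ZMod p)) - (b : Matrix (Fin 2) (Fin 2) (ZMod p)) ≠ 0 := by
      intro h
      exact hab (Subtype.coe_injective (sub_eq_zero.mp h))
    have hS0 : ∀ x ∈ S, Matrix.trace
        (((a : Matrix (Fin 2) (Fin 2) (ZMod p)) - (b : Matrix (Fin 2) (Fin 2) (ZMod p))) * x) = 0 := by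
      intro x hx
      let L : Matrix (Fin 2) (Fin 2) (ZMod p) →ₗ[ZMod p] ZMod p :=
        (Matrix.traceLinearMap (Fin 2) (ZMod p) (ZMod p)).comp
          (LinearMap.mulLeft (ZMod p)
            ((a : Matrix (Fin 2) (Fin 2) (ZMod p)) - (b : Matrix (Fin 2) (Fin 2) (ZMod p))))
      have hker : Y ⊆ (LinearMap.ker L : Set (Matrix (Fin 2) (Fin 2) (ZMod p))) := by
        intro y hy
        have hy0 : Matrix.trace
            (((a : Matrix (Fin 2) (Fin 2) (ZMod p)) - (b : Matrix (Fin 2) (Fin 2) (ZMod p))) * y) = 0 := by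
          rw [sub_mul, Matrix.trace_sub, heq y hy, sub_self]
        simpa [L, LinearMap.mem_ker, LinearMap.mulLeft_apply] using hy0
      have hsle : Submodule.span (ZMod p) Y ≤ LinearMap.ker L := Submodule.span_le.mpr hker
      rw [hYspan] at hsle
      have hmem := hsle (Submodule.subset_span hx)
      simpa [L, LinearMap.mem_ker, LinearMap.mulLeft_apply] using hmem
    have h1S : (1 : Matrix (Fin 2) (Fin 2) (ZMod p)) ∈ S := Or.inr rfl
    have hbS : ((b : Matrix (Fin 2) (Fin 2) (ZMod p))) ∈ S := Or.inl ⟨b, hb, rfl⟩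
    have htrv : Matrix.trace
        ((a : Matrix (Fin 2) (Fin 2) (ZMod p)) - (b : Matrix (Fin 2) (Fin 2) (ZMod p))) = 0 := by
      have h := hS0 1 h1S; rwa [mul_one] at h
    have htra : Matrix.trace ((a : Matrix (Fin 2) (Fin 2) (ZMod p))) =
        Matrix.trace ((b : Matrix (Fin 2) (Fin 2) (ZMod p))) := by
      rw [Matrix.trace_sub, sub_eq_zero] at htrv
      exact htrv
    have hdetv : Matrix.det
        ((a : Matrix (Fin 2) (Fin 2) (ZMod p)) - (b : Matrix (Fin 2) (Fin 2) (ZMod p))) = 0 := by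
      have hb0 := hS0 (b : Matrix (Fin 2) (Fin 2) (ZMod p)) hbS
      rw [sub_mul, Matrix.trace_sub, sub_eq_zero] at hb0
      have hbb := trace_sq' (b : Matrix (Fin 2) (Fin 2) (ZMod p))
      rw [Matrix.SpecialLinearGroup.det_coe] at hbb
      rw [det_sub', Matrix.SpecialLinearGroup.det_coe, Matrix.SpecialLinearGroup.det_coe]
      linear_combination hb0 + hbb - Matrix.trace ((b : Matrix (Fin 2) (Fin 2) (ZMod p))) * htra
    have htrvagain : Matrix.trace
        ((a : Matrix (Fin 2) (Fin 2) (ZMod p)) - (b : Matrix (Fin 2) (Fin 2) (ZMod p))) = 0 := by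
      rw [Matrix.trace_sub, htra, sub_self]
    have hAv : ∀ g ∈ A, Matrix.trace ((g : Matrix (Fin 2) (Fin 2) (ZMod p)) *
        ((a : Matrix (Fin 2) (Fin 2) (ZMod p)) - (b : Matrix (Fin 2) (Fin 2) (ZMod p)))) = 0 := by
      intro g hg
      have h := hS0 (g : Matrix (Fin 2) (Fin 2) (ZMod p)) (Or.inl ⟨g, hg, rfl⟩)
      rwa [Matrix.trace_mul_comm] at h
    exact borel_contra A hgen _ hvne htrvagain hdetv hAv
  · -- no collision : counting gives |A| ≤ 81
    push_neg at hcol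
    have hcy : ∀ y ∈ Yf, ∀ a : Matrix.SpecialLinearGroup (Fin 2) (ZMod p), a ∈ A →
        Matrix.trace ((a : Matrix (Fin 2) (Fin 2) (ZMod p)) * y) = 0 ∨
        Matrix.trace ((a : Matrix (Fin 2) (Fin 2) (ZMod p)) * y) =
          (if y = (1 : Matrix (Fin 2) (Fin 2) (ZMod p)) then c else 2) ∨
        Matrix.trace ((a : Matrix (Fin 2) (Fin 2) (ZMod p)) * y) =
          -(if y = (1 : Matrix (Fin 2) (Fin 2) (ZMod p)) then c else 2) := by
      intro y hy a ha
      have hyY : y ∈ Y := (Set.Finite.mem_toFinset hYfin).mp hy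
      by_cases h1 : y = (1 : Matrix (Fin 2) (Fin 2) (ZMod p))
      · subst h1
        simp only [if_pos rfl, mul_one]
        exact hcA a ha
      · rcases hYS hyY with ⟨b, hbA, rfl⟩ | h
        · simp only [if_neg h1]
          exact hW' a b ha (Finset.mem_coe.mp hbA)
        · exact absurd h h1
    let Φ : Matrix.SpecialLinearGroup (Fin 2) (ZMod p) → ({ y // y ∈ Yf } → Fin 3) :=
      fun a => fun y =>
        if Matrix.trace ((a : Matrix (Fin 2) (Fin 2) (ZMod p)) * y.1) = 0 then 0
        else if Matrix.trace ((a : Matrix (Fin 2) (Fin 2) (ZMod p)) * y.1) =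
          (if y.1 = (1 : Matrix (Fin 2) (Fin 2) (ZMod p)) then c else 2) then 1 else 2
    have hinj : Set.InjOn Φ (A : Set (Matrix.SpecialLinearGroup (Fin 2) (ZMod p))) := by
      intro a ha b hb hab
      by_contra hne
      obtain ⟨y, hyY, hyne⟩ := hcol a (Finset.mem_coe.mp ha) b (Finset.mem_coe.mp hb) hne
      have hyYf : y ∈ Yf := (Set.Finite.mem_toFinset hYfin).mpr hyY
      have hfun := congrFun hab ⟨y, hyYf⟩
      exact hyne (enc_eq (hcy y hyYf a (Finset.mem_coe.mp ha))
        (hcy y hyYf b (Finset.mem_coe.mp hb)) hfun)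
    have hcard : A.card ≤ 3 ^ Yf.card := by
      have h1 : A.card ≤ (Finset.univ : Finset ({ y // y ∈ Yf } → Fin 3)).card :=
        Finset.card_le_card_of_injOn Φ (fun a _ => Finset.mem_univ _) hinj
      rwa [Finset.card_univ, Fintype.card_fun, Fintype.card_coe, Fintype.card_fin] at h1
    have h81 : (3 : ℕ) ^ Yf.card ≤ 81 := by
      calc (3:ℕ) ^ Yf.card ≤ 3 ^ 4 := Nat.pow_le_pow_right (by norm_num) hYcard
        _ = 81 := by norm_num
    omega
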